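/- Let A, B ⊂ ℝ² be bounded open sets of positive measure and consider the sample space S = {(a₁, a₂, b₁, β) ∈ A² × B × [-1/2,1/2) : a₁ ≠ a₂, b₁ + ‖a₂ - a₁‖·M_β(1,0)ᵀ ∈ B}. Then the measure |S| of S satisfies |S| ≤ |A|²·|B|, and for the rigid motion r determined by a uniformly random element of S, the induced density at r equals |r(A) ∩ B|²/|S|. -/

import Mathlib

open MeasureTheory Real

noncomputable section

/-- Rotation of the Euclidean plane by angle `2πα`. -/
def rotE (α : ℝ) (x : EuclideanSpace ℝ (Fin 2)) : EuclideanSpace ℝ (Fin 2) :=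
  (WithLp.equiv 2 (Fin 2 → ℝ)).symm
    ![Real.cos (2 * π * α) * x 0 - Real.sin (2 * π * α) * x 1,
      Real.sin (2 * π * α) * x 0 + Real.cos (2 * π * α) * x 1]

/-- The first standard basis vector `(1,0)ᵀ` of the plane. -/
def e₁ : EuclideanSpace ℝ (Fin 2) := (WithLp.equiv 2 (Fin 2 → ℝ)).symm ![1, 0]

/-- The angle of a plane vector, normalized to a fraction of a full turn. -/
def dirAngle (v : EuclideanSpace ℝ (Fin 2)) : ℝ :=
  Complex.arg (Complex.mk (v 0) (v 1)) / (2 * π)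

/-- The rotation-angle parameter (in `[-1/2, 1/2)`) of the rigid motion mapping
`a₁ ↦ b₁`, `a₂ ↦ b₁ + ‖a₂-a₁‖·M_β(1,0)ᵀ`. -/
def sampleAngle (a₁ a₂ : EuclideanSpace ℝ (Fin 2)) (β : ℝ) : ℝ :=
  Int.fract (β - dirAngle (a₂ - a₁) + 1 / 2) - 1 / 2

/- ### Auxiliary material -/

abbrev E2 := EuclideanSpace ℝ (Fin 2)

lemma rotE_apply0 (α : ℝ) (x : E2) :
    rotE α x 0 = Real.cos (2 * π * α) * x 0 - Real.sin (2 * π * α) * x 1 := rfl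
lemma rotE_apply1 (α : ℝ) (x : E2) :
    rotE α x 1 = Real.sin (2 * π * α) * x 0 + Real.cos (2 * π * α) * x 1 := rfl

lemma euclid_ext {x y : E2} (h0 : x 0 = y 0) (h1 : x 1 = y 1) : x = y := by
  ext i; fin_cases i <;> assumption

lemma e₁_apply0 : e₁ 0 = 1 := rfl
lemma e₁_apply1 : e₁ 1 = 0 := rfl

/-- `rotE α` as a linear map. -/
def rotL (α : ℝ) : E2 →ₗ[ℝ] E2 where
  toFun := rotE α
  map_add' x y := by
    apply euclid_ext <;>
      simp only [rotE_apply0, rotE_apply1, PiLp.add_apply] <;> ring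
  map_smul' c x := by
    apply euclid_ext <;>
      simp only [rotE_apply0, rotE_apply1, PiLp.smul_apply, RingHom.id_apply,
        smul_eq_mul] <;> ring

lemma rotE_sub (α : ℝ) (x y : E2) : rotE α (x - y) = rotE α x - rotE α y :=
  (rotL α).map_sub x y

lemma rotE_smul (α c : ℝ) (x : E2) : rotE α (c • x) = c • rotE α x :=
  (rotL α).map_smul c x

lemma rotE_add_apply (α β : ℝ) (x : E2) :
    rotE α (rotE β x) = rotE (α + β) x := by
  apply euclid_ext <;>
  · simp only [rotE_apply0, rotE_apply1,
      show 2 * π * (α + β) = 2*π*α + 2*π*β from by ring, Real.cos_add, Real.sin_add]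
    ring

lemma rotE_zero (x : E2) : rotE 0 x = x := by
  apply euclid_ext <;> simp [rotE_apply0, rotE_apply1]

lemma rotE_intCast_add (k : ℤ) (α : ℝ) (x : E2) :
    rotE (α + k) x = rotE α x := by
  apply euclid_ext <;>
  · simp only [rotE_apply0, rotE_apply1]
    rw [show 2 * π * (α + k) = 2*π*α + k * (2*π) by ring,
      Real.cos_add_int_mul_two_pi, Real.sin_add_int_mul_two_pi]

lemma rotE_neg_rotE (α : ℝ) (x : E2) : rotE (-α) (rotE α x) = x := by
  rw [rotE_add_apply, neg_add_cancel, rotE_zero]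

lemma rotL_det (α : ℝ) : LinearMap.det (rotL α) = 1 := by
  rw [← LinearMap.det_toMatrix (EuclideanSpace.basisFun (Fin 2) ℝ).toBasis]
  rw [Matrix.det_fin_two]
  simp only [LinearMap.toMatrix_apply, OrthonormalBasis.coe_toBasis,
    OrthonormalBasis.coe_toBasis_repr_apply, EuclideanSpace.basisFun_repr,
    EuclideanSpace.basisFun_apply]
  simp only [rotL, LinearMap.coe_mk, AddHom.coe_mk, rotE_apply0, rotE_apply1,
    EuclideanSpace.single_apply]
  norm_num
  rw [← Real.cos_sq_add_sin_sq (2*π*α)]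
  ring

lemma rotE_decomp (α : ℝ) (x : E2) :
    rotE α x = Real.cos (2*π*α) • x + Real.sin (2*π*α) • rotE (1/4) x := by
  apply euclid_ext <;>
    · simp only [rotE_apply0, rotE_apply1, PiLp.add_apply, PiLp.smul_apply, smul_eq_mul,
        show 2*π*(1/4 : ℝ) = π/2 from by ring, Real.cos_pi_div_two, Real.sin_pi_div_two]
      ring

lemma continuous_rotE : Continuous fun p : ℝ × E2 => rotE p.1 p.2 := by
  have h : (fun p : ℝ × E2 => rotE p.1 p.2)
      = fun p => Real.cos (2*π*p.1) • p.2 + Real.sin (2*π*p.1) • rotE (1/4) p.2 :=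
    funext fun p => rotE_decomp p.1 p.2
  have hc : Continuous (rotE (1/4)) := by
    have h4 : (rotE (1/4 : ℝ)) = ⇑(rotL (1/4)) := rfl
    rw [h4]; exact (rotL (1/4)).continuous_of_finiteDimensional
  rw [h]
  exact (((Real.continuous_cos.comp (by fun_prop)).comp continuous_fst).smul continuous_snd).add
    (((Real.continuous_sin.comp (by fun_prop)).comp continuous_fst).smul (hc.comp continuous_snd))

lemma measurable_rotE : Measurable fun p : ℝ × E2 => rotE p.1 p.2 :=
  continuous_rotE.measurable

lemma rotE_map_volume (α : ℝ) : Measure.map (rotE α) volume = volume := by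
  have h : (rotE α) = ⇑(rotL α) := rfl
  rw [h, MeasureTheory.Measure.map_linearMap_addHaar_eq_smul_addHaar volume
    (by rw [rotL_det]; norm_num), rotL_det]
  norm_num

lemma measurePreserving_rotE (α : ℝ) : MeasurePreserving (rotE α) volume volume :=
  ⟨(continuous_rotE.comp (Continuous.prodMk_right α)).measurable, rotE_map_volume α⟩

lemma norm_eq_cabs (v : E2) : ‖v‖ = ‖Complex.mk (v 0) (v 1)‖ := by
  rw [EuclideanSpace.norm_eq, Fin.sum_univ_two, Complex.norm_def, Complex.normSq_mk]
  simp [Real.norm_eq_abs, sq_abs]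
  ring_nf

lemma norm_smul_rotE_dirAngle (v : E2) (hv : v ≠ 0) : ‖v‖ • rotE (dirAngle v) e₁ = v := by
  set z : ℂ := Complex.mk (v 0) (v 1) with hz
  have hz0 : z ≠ 0 := by
    intro h
    apply hv
    apply euclid_ext
    · simpa using congrArg Complex.re h
    · simpa using congrArg Complex.im h
  have habs : ‖z‖ ≠ 0 := by simpa using hz0
  have harg : 2 * π * dirAngle v = Complex.arg z := by
    rw [dirAngle]
    field_simp
    rfl
  apply euclid_ext
  · rw [PiLp.smul_apply, rotE_apply0, e₁_apply0, e₁_apply1, harg, Complex.cos_arg hz0,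
      norm_eq_cabs, smul_eq_mul]
    field_simp
    rw [mul_zero, sub_zero]
  · rw [PiLp.smul_apply, rotE_apply1, e₁_apply0, e₁_apply1, harg, Complex.sin_arg,
      norm_eq_cabs, smul_eq_mul]
    field_simp
    rw [mul_zero, add_zero]

lemma smul_rotE_eq {a₁ a₂ : E2} (h : a₁ ≠ a₂) (β : ℝ) :
    ‖a₂ - a₁‖ • rotE β e₁ = rotE (sampleAngle a₁ a₂ β) (a₂ - a₁) := by
  set θ := dirAngle (a₂ - a₁) with hθ
  set α := sampleAngle a₁ a₂ β with hα
  set k : ℤ := ⌊β - θ + 1/2⌋ with hk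
  have hv : a₂ - a₁ ≠ 0 := sub_ne_zero.2 (Ne.symm h)
  have hβ : β = (α + θ) + (k : ℝ) := by
    rw [hα, sampleAngle, Int.fract, ← hθ, ← hk]; ring
  calc ‖a₂ - a₁‖ • rotE β e₁ = ‖a₂ - a₁‖ • rotE ((α + θ) + (k:ℝ)) e₁ := by rw [← hβ]
    _ = ‖a₂ - a₁‖ • rotE (α + θ) e₁ := by rw [rotE_intCast_add]
    _ = ‖a₂ - a₁‖ • rotE α (rotE θ e₁) := by rw [rotE_add_apply]
    _ = rotE α (‖a₂ - a₁‖ • rotE θ e₁) := (rotE_smul _ _ _).symm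
    _ = rotE α (a₂ - a₁) := by rw [hθ, norm_smul_rotE_dirAngle _ hv]

lemma sampleAngle_mem (a₁ a₂ : E2) (β : ℝ) :
    sampleAngle a₁ a₂ β ∈ Set.Ico (-(1/2) : ℝ) (1/2) := by
  constructor
  · have := Int.fract_nonneg (β - dirAngle (a₂ - a₁) + 1/2)
    rw [sampleAngle]; linarith
  · have := Int.fract_lt_one (β - dirAngle (a₂ - a₁) + 1/2)
    rw [sampleAngle]; linarith

/- ### Measure-preservation of the mod-1 translation -/

lemma map_translate_restrict (d : ℝ) (I : Set ℝ) :
    Measure.map (fun x => x + d) (volume.restrict I) = volume.restrict ((fun x => x + d) '' I) :=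
  ((measurePreserving_add_right volume d).restrict_image_emb
    (Homeomorph.addRight d).measurableEmbedding I).map_eq

lemma map_fract_restrict (c : ℝ) :
    Measure.map (fun x => Int.fract (x + c) - 1/2)
        (volume.restrict (Set.Ico (-(1/2) : ℝ) (1/2)))
      = volume.restrict (Set.Ico (-(1/2) : ℝ) (1/2)) := by
  set m : ℤ := ⌊c - 1/2⌋ with hm
  set s : ℝ := (m : ℝ) + 1 - c with hs
  have hfl1 : c - 1/2 < (m : ℝ) + 1 := Int.lt_floor_add_one (c - 1/2)
  have hfl2 : (m : ℝ) ≤ c - 1/2 := Int.floor_le (c - 1/2)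
  have hs1 : -(1/2 : ℝ) < s := by rw [hs]; linarith
  have hs2 : s ≤ (1/2 : ℝ) := by rw [hs]; linarith
  have hmeas : Measurable (fun x : ℝ => Int.fract (x + c) - 1/2) :=
    ((measurable_id.add_const c).fract).sub_const _
  have hsplit : Set.Ico (-(1/2):ℝ) (1/2) = Set.Ico (-(1/2)) s ∪ Set.Ico s (1/2) :=
    (Set.Ico_union_Ico_eq_Ico hs1.le hs2).symm
  have hdisj : Disjoint (Set.Ico (-(1/2):ℝ) s) (Set.Ico s (1/2)) :=
    Set.Ico_disjoint_Ico_same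
  have h1 : ∀ x ∈ Set.Ico (-(1/2):ℝ) s, Int.fract (x + c) - 1/2 = x + (c - m - 1/2) := by
    intro x hx
    have hfloor : ⌊x + c⌋ = m := by
      rw [Int.floor_eq_iff]
      constructor
      · linarith [hx.1]
      · have := hx.2; rw [hs] at this; push_cast; linarith
    rw [Int.fract, hfloor]; ring
  have h2 : ∀ x ∈ Set.Ico s (1/2 : ℝ), Int.fract (x + c) - 1/2 = x + (c - m - 3/2) := by
    intro x hx
    have hfloor : ⌊x + c⌋ = m + 1 := by
      rw [Int.floor_eq_iff]
      constructor
      · have := hx.1; rw [hs] at this; push_cast; linarith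
      · have := hx.2; push_cast; linarith
    rw [Int.fract, hfloor]; push_cast; ring
  rw [hsplit, Measure.restrict_union hdisj measurableSet_Ico, Measure.map_add _ _ hmeas]
  have e1 : Measure.map (fun x : ℝ => Int.fract (x + c) - 1/2)
      (volume.restrict (Set.Ico (-(1/2)) s)) = volume.restrict (Set.Ico (-s) (1/2)) := by
    rw [Measure.map_congr (g := fun x => x + (c - m - 1/2)) ?_]
    · rw [map_translate_restrict, Set.image_add_const_Ico]
      congr 1 <;> (rw [hs]; push_cast) <;> ring_nf
    · refine (ae_restrict_iff' measurableSet_Ico).2 (ae_of_all _ ?_)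
      exact h1
  have e2 : Measure.map (fun x : ℝ => Int.fract (x + c) - 1/2)
      (volume.restrict (Set.Ico s (1/2))) = volume.restrict (Set.Ico (-(1/2)) (-s)) := by
    rw [Measure.map_congr (g := fun x => x + (c - m - 3/2)) ?_]
    · rw [map_translate_restrict, Set.image_add_const_Ico]
      congr 1 <;> (rw [hs]; push_cast) <;> ring_nf
    · refine (ae_restrict_iff' measurableSet_Ico).2 (ae_of_all _ ?_)
      exact h2
  rw [e1, e2, add_comm, ← Measure.restrict_union Set.Ico_disjoint_Ico_same
    measurableSet_Ico, Set.Ico_union_Ico_eq_Ico (by linarith) (by linarith)]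
  rw [hsplit, Measure.restrict_union hdisj measurableSet_Ico]

lemma map_sampleAngle_restrict (a₁ a₂ : E2) :
    Measure.map (fun β => sampleAngle a₁ a₂ β)
        (volume.restrict (Set.Ico (-(1/2) : ℝ) (1/2)))
      = volume.restrict (Set.Ico (-(1/2) : ℝ) (1/2)) := by
  have h : (fun β => sampleAngle a₁ a₂ β)
      = fun x => Int.fract (x + (1/2 - dirAngle (a₂ - a₁))) - 1/2 := by
    funext x
    rw [sampleAngle]
    congr 2
    ring
  rw [h, map_fract_restrict]

/- ### Measurability lemmas -/

lemma measurable_applyE (i : Fin 2) : Measurable fun v : E2 => v i :=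
  ((continuous_apply i).comp (PiLp.continuous_ofLp 2 (fun _ : Fin 2 => ℝ))).measurable

lemma measurable_mkC : Measurable fun ab : ℝ × ℝ => Complex.mk ab.1 ab.2 := by
  simp_rw [Complex.mk_eq_add_mul_I]
  exact (Complex.measurable_ofReal.comp measurable_fst).add
    ((Complex.measurable_ofReal.comp measurable_snd).mul_const Complex.I)

lemma measurable_dirAngle : Measurable dirAngle := by
  unfold dirAngle
  exact (Complex.measurable_arg.comp
    (measurable_mkC.comp ((measurable_applyE 0).prodMk (measurable_applyE 1)))).div_const _

lemma measurable_sampleAngle_comp {γ : Type*} [MeasurableSpace γ] {f g : γ → E2} {h : γ → ℝ}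
    (hf : Measurable f) (hg : Measurable g) (hh : Measurable h) :
    Measurable fun x => sampleAngle (f x) (g x) (h x) := by
  unfold sampleAngle
  exact (((hh.sub (measurable_dirAngle.comp (hg.sub hf))).add_const _).fract).sub_const _

set_option maxHeartbeats 1000000 in
lemma measurable_rotE_comp {γ : Type*} [MeasurableSpace γ] {f : γ → ℝ} {g : γ → E2}
    (hf : Measurable f) (hg : Measurable g) :
    Measurable fun x => rotE (f x) (g x) := by
  have h := measurable_rotE.comp (hf.prodMk hg)
  exact h

set_option maxHeartbeats 1000000 in
lemma continuous_rotE_comp {γ : Type*} [TopologicalSpace γ] {f : γ → ℝ} {g : γ → E2}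
    (hf : Continuous f) (hg : Continuous g) :
    Continuous fun x => rotE (f x) (g x) := by
  have h := continuous_rotE.comp (hf.prodMk hg)
  exact h

/- ### Volume of the image of a set under a rigid motion -/

lemma rigid_injective (α : ℝ) (u : E2) : Function.Injective (fun y => rotE α y + u) := by
  intro x y hxy
  have h2 : rotE α x = rotE α y := by
    have := hxy
    simpa using add_right_cancel (a := rotE α x) (b := u) (by simpa using hxy)
  have := congrArg (rotE (-α)) h2
  rwa [rotE_neg_rotE, rotE_neg_rotE] at this

lemma measurePreserving_rigid (α : ℝ) (u : E2) :
    MeasurePreserving (fun y : E2 => rotE α y + u) volume volume :=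
  (measurePreserving_add_right volume u).comp (measurePreserving_rotE α)

lemma rigid_image_eq_preimage (α : ℝ) (u : E2) (s : Set E2) :
    (fun y : E2 => rotE α y + u) '' s = (fun y : E2 => rotE (-α) (y - u)) ⁻¹' s := by
  have h := Set.image_eq_preimage_of_inverse (f := fun y : E2 => rotE α y + u)
    (g := fun y : E2 => rotE (-α) (y - u)) ?_ ?_
  · exact congrFun h s
  · intro x
    simp only
    rw [add_sub_cancel_right, rotE_neg_rotE]
  · intro y
    simp only
    rw [rotE_add_apply, add_neg_cancel, rotE_zero, sub_add_cancel]

lemma volume_rigid_image (α : ℝ) (u : E2) {s : Set E2} (hs : MeasurableSet s) :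
    volume ((fun y : E2 => rotE α y + u) '' s) = volume s := by
  have hmp := measurePreserving_rigid α u
  have himg : MeasurableSet ((fun y : E2 => rotE α y + u) '' s) := by
    rw [rigid_image_eq_preimage]
    exact hs.preimage (measurable_rotE_comp measurable_const (measurable_id.sub_const u))
  calc volume ((fun y : E2 => rotE α y + u) '' s)
      = Measure.map (fun y : E2 => rotE α y + u) volume ((fun y : E2 => rotE α y + u) '' s) := by
        rw [hmp.map_eq]
    _ = volume ((fun y : E2 => rotE α y + u) ⁻¹' ((fun y : E2 => rotE α y + u) '' s)) :=
        Measure.map_apply hmp.measurable himg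
    _ = volume s := by rw [Set.preimage_image_eq _ (rigid_injective α u)]

/- ### The measure-preserving reparametrization -/

abbrev muI : Measure ℝ := volume.restrict (Set.Ico (-(1/2) : ℝ) (1/2))

def ΨT : E2 × E2 × E2 × ℝ → (E2 × E2) × ℝ × E2 := fun q =>
  ((q.1, q.2.1), (sampleAngle q.1 q.2.1 q.2.2.2,
    q.2.2.1 - rotE (sampleAngle q.1 q.2.1 q.2.2.2) q.1))

lemma measurable_ΨT : Measurable ΨT := by
  unfold ΨT
  refine Measurable.prodMk (measurable_fst.prodMk measurable_snd.fst) ?_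
  refine Measurable.prodMk ?_ ?_
  · exact measurable_sampleAngle_comp measurable_fst measurable_snd.fst
      measurable_snd.snd.snd
  · exact measurable_snd.snd.fst.sub
      (measurable_rotE_comp (measurable_sampleAngle_comp measurable_fst measurable_snd.fst
        measurable_snd.snd.snd) measurable_fst)

lemma measurePreserving_ΨT :
    MeasurePreserving ΨT
      ((volume : Measure E2).prod ((volume : Measure E2).prod ((volume : Measure E2).prod muI)))
      (((volume : Measure E2).prod (volume : Measure E2)).prod (muI.prod (volume : Measure E2))) := by
  have h1 : MeasurePreserving
      (Prod.map (id : E2 → E2) (Prod.map (id : E2 → E2) (Prod.swap : E2 × ℝ → ℝ × E2)))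
      ((volume : Measure E2).prod ((volume : Measure E2).prod ((volume : Measure E2).prod muI)))
      ((volume : Measure E2).prod ((volume : Measure E2).prod (muI.prod (volume : Measure E2)))) :=
    (MeasurePreserving.id _).prod ((MeasurePreserving.id _).prod Measure.measurePreserving_swap)
  have h2 : MeasurePreserving (MeasurableEquiv.prodAssoc.symm :
        E2 × (E2 × (ℝ × E2)) ≃ᵐ (E2 × E2) × (ℝ × E2))
      ((volume : Measure E2).prod ((volume : Measure E2).prod (muI.prod (volume : Measure E2))))
      (((volume : Measure E2).prod (volume : Measure E2)).prod (muI.prod (volume : Measure E2))) :=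
    MeasurePreserving.symm MeasurableEquiv.prodAssoc
      (measurePreserving_prodAssoc _ _ _)
  have hinner : ∀ a : E2 × E2, MeasurePreserving
      (fun p : ℝ × E2 => (sampleAngle a.1 a.2 p.1, p.2 - rotE (sampleAngle a.1 a.2 p.1) a.1))
      (muI.prod (volume : Measure E2)) (muI.prod (volume : Measure E2)) := by
    intro a
    refine MeasurePreserving.skew_product (f := fun β : ℝ => sampleAngle a.1 a.2 β)
      (g := fun β (b : E2) => b - rotE (sampleAngle a.1 a.2 β) a.1)
      (μc := (volume : Measure E2)) (μd := (volume : Measure E2))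
      ⟨measurable_sampleAngle_comp measurable_const measurable_const measurable_id,
        map_sampleAngle_restrict a.1 a.2⟩
      ?_ (ae_of_all _ fun β => ?_)
    · exact measurable_snd.sub
        (measurable_rotE_comp (measurable_sampleAngle_comp measurable_const measurable_const
          measurable_fst) measurable_const)
    · show Measure.map (fun b : E2 => b - rotE (sampleAngle a.1 a.2 β) a.1) volume = volume
      have hv : (fun b : E2 => b - rotE (sampleAngle a.1 a.2 β) a.1)
          = fun b => b + (-(rotE (sampleAngle a.1 a.2 β) a.1)) :=
        funext fun b => sub_eq_add_neg _ _
      rw [hv]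
      exact (measurePreserving_add_right volume _).map_eq
  have houter : MeasurePreserving
      (fun p : (E2 × E2) × (ℝ × E2) =>
        (p.1, (sampleAngle p.1.1 p.1.2 p.2.1, p.2.2 - rotE (sampleAngle p.1.1 p.1.2 p.2.1) p.1.1)))
      (((volume : Measure E2).prod (volume : Measure E2)).prod (muI.prod (volume : Measure E2)))
      (((volume : Measure E2).prod (volume : Measure E2)).prod (muI.prod (volume : Measure E2))) := by
    refine MeasurePreserving.skew_product (f := (id : E2 × E2 → E2 × E2))
      (g := fun (a : E2 × E2) (p : ℝ × E2) =>
        (sampleAngle a.1 a.2 p.1, p.2 - rotE (sampleAngle a.1 a.2 p.1) a.1))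
      (μc := muI.prod (volume : Measure E2)) (μd := muI.prod (volume : Measure E2))
      (MeasurePreserving.id _) ?_ (ae_of_all _ fun a => (hinner a).map_eq)
    exact (measurable_sampleAngle_comp measurable_fst.fst measurable_fst.snd
      measurable_snd.fst).prodMk
      (measurable_snd.snd.sub (measurable_rotE_comp
        (measurable_sampleAngle_comp measurable_fst.fst measurable_fst.snd measurable_snd.fst)
        measurable_fst.fst))
  exact houter.comp (h2.comp h1)


lemma prod_restrict_univ_left {α β : Type*} [MeasureSpace α] [MeasureSpace β]
    [SigmaFinite (volume : Measure α)] [SigmaFinite (volume : Measure β)] (t : Set β) :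
    (volume : Measure α).prod ((volume : Measure β).restrict t)
      = (volume : Measure (α × β)).restrict (Set.univ ×ˢ t) := by
  calc (volume : Measure α).prod ((volume : Measure β).restrict t)
      = ((volume : Measure α).restrict Set.univ).prod ((volume : Measure β).restrict t) := by
        rw [Measure.restrict_univ]
    _ = ((volume : Measure α).prod (volume : Measure β)).restrict (Set.univ ×ˢ t) :=
        Measure.prod_restrict _ _
    _ = (volume : Measure (α × β)).restrict (Set.univ ×ˢ t) := by
        rw [← Measure.volume_eq_prod]

lemma restrict_prod_univ_right {α β : Type*} [MeasureSpace α] [MeasureSpace β]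
    [SigmaFinite (volume : Measure α)] [SigmaFinite (volume : Measure β)] (s : Set α) :
    ((volume : Measure α).restrict s).prod (volume : Measure β)
      = (volume : Measure (α × β)).restrict (s ×ˢ Set.univ) := by
  calc ((volume : Measure α).restrict s).prod (volume : Measure β)
      = ((volume : Measure α).restrict s).prod ((volume : Measure β).restrict Set.univ) := by
        rw [Measure.restrict_univ]
    _ = ((volume : Measure α).prod (volume : Measure β)).restrict (s ×ˢ Set.univ) :=
        Measure.prod_restrict _ _
    _ = (volume : Measure (α × β)).restrict (s ×ˢ Set.univ) := by
        rw [← Measure.volume_eq_prod]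

lemma star_lemma (A B : Set E2) (hAo : IsOpen A) (hBo : IsOpen B)
    (S : Set (E2 × E2 × E2 × ℝ))
    (hS : S = {q | q.1 ∈ A ∧ q.2.1 ∈ A ∧ q.2.2.1 ∈ B ∧
      q.2.2.2 ∈ Set.Ico (-(1 / 2) : ℝ) (1 / 2) ∧ q.1 ≠ q.2.1 ∧
      q.2.2.1 + ‖q.2.1 - q.1‖ • rotE q.2.2.2 e₁ ∈ B}) :
    Measure.map (fun q : E2 × E2 × E2 × ℝ =>
        ((sampleAngle q.1 q.2.1 q.2.2.2 : ℝ),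
          q.2.2.1 - rotE (sampleAngle q.1 q.2.1 q.2.2.2) q.1))
      (volume.restrict S)
      = (volume.restrict ((Set.Ico (-(1 / 2) : ℝ) (1 / 2)) ×ˢ (Set.univ : Set E2))).withDensity
          (fun r => volume ((fun x => rotE r.1 x + r.2) '' A ∩ B) ^ 2) := by
  classical
  set S' : Set ((E2 × E2) × ℝ × E2) := {p | p.1.1 ∈ A ∧ p.1.2 ∈ A ∧ p.1.1 ≠ p.1.2 ∧
    rotE p.2.1 p.1.1 + p.2.2 ∈ B ∧ rotE p.2.1 p.1.2 + p.2.2 ∈ B} with hS'def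
  have hS'meas : MeasurableSet S' := by
    rw [hS'def]
    simp only [Set.setOf_and]
    refine MeasurableSet.inter (hAo.measurableSet.preimage measurable_fst.fst) ?_
    refine MeasurableSet.inter (hAo.measurableSet.preimage measurable_fst.snd) ?_
    refine MeasurableSet.inter ?_ ?_
    · exact (measurableSet_eq_fun measurable_fst.fst measurable_fst.snd).compl
    refine MeasurableSet.inter ?_ ?_
    · exact hBo.measurableSet.preimage
        ((measurable_rotE_comp measurable_snd.fst measurable_fst.fst).add measurable_snd.snd)
    · exact hBo.measurableSet.preimage
        ((measurable_rotE_comp measurable_snd.fst measurable_fst.snd).add measurable_snd.snd)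
  have hset : (ΨT ⁻¹' S') ∩ ((Set.univ : Set E2) ×ˢ ((Set.univ : Set E2) ×ˢ
      ((Set.univ : Set E2) ×ˢ Set.Ico (-(1/2) : ℝ) (1/2)))) = S := by
    ext q
    obtain ⟨a₁, a₂, b₁, β⟩ := q
    simp only [Set.mem_inter_iff, Set.mem_preimage, Set.mem_prod, Set.mem_univ, true_and,
      hS, hS'def, Set.mem_setOf_eq, ΨT]
    have e1 : rotE (sampleAngle a₁ a₂ β) a₁ + (b₁ - rotE (sampleAngle a₁ a₂ β) a₁) = b₁ := by
      abel
    constructor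
    · rintro ⟨⟨h1, h2, h3, h4, h5⟩, h6⟩
      refine ⟨h1, h2, ?_, h6, h3, ?_⟩
      · rwa [e1] at h4
      · have e2 : rotE (sampleAngle a₁ a₂ β) a₂ + (b₁ - rotE (sampleAngle a₁ a₂ β) a₁)
            = b₁ + ‖a₂ - a₁‖ • rotE β e₁ := by
          rw [smul_rotE_eq h3 β, rotE_sub]; abel
        rwa [e2] at h5
    · rintro ⟨h1, h2, h3, h4, h5, h6⟩
      refine ⟨⟨h1, h2, h5, ?_, ?_⟩, h4⟩
      · rwa [e1]
      · have e2 : rotE (sampleAngle a₁ a₂ β) a₂ + (b₁ - rotE (sampleAngle a₁ a₂ β) a₁)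
            = b₁ + ‖a₂ - a₁‖ • rotE β e₁ := by
          rw [smul_rotE_eq h5 β, rotE_sub]; abel
        rwa [e2]
  have hμ0 : (volume : Measure E2).prod ((volume : Measure E2).prod
        ((volume : Measure E2).prod muI))
      = (volume : Measure (E2 × E2 × E2 × ℝ)).restrict ((Set.univ : Set E2) ×ˢ
        ((Set.univ : Set E2) ×ˢ ((Set.univ : Set E2) ×ˢ Set.Ico (-(1/2) : ℝ) (1/2)))) := by
    rw [show muI = (volume : Measure ℝ).restrict (Set.Ico (-(1/2) : ℝ) (1/2)) from rfl,
      prod_restrict_univ_left, prod_restrict_univ_left, prod_restrict_univ_left]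
  have hrestr : ((volume : Measure E2).prod ((volume : Measure E2).prod
        ((volume : Measure E2).prod muI))).restrict (ΨT ⁻¹' S')
      = volume.restrict S := by
    rw [hμ0, Measure.restrict_restrict (measurable_ΨT hS'meas), hset]
  have hmapΨ : Measure.map ΨT (volume.restrict S)
      = ((((volume : Measure E2).prod (volume : Measure E2))).prod
          (muI.prod (volume : Measure E2))).restrict S' := by
    rw [← hrestr]
    exact (measurePreserving_ΨT.restrict_preimage hS'meas).map_eq
  have hTsnd : (fun q : E2 × E2 × E2 × ℝ =>
      ((sampleAngle q.1 q.2.1 q.2.2.2 : ℝ),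
        q.2.2.1 - rotE (sampleAngle q.1 q.2.1 q.2.2.2) q.1)) = Prod.snd ∘ ΨT := rfl
  rw [hTsnd, ← Measure.map_map measurable_snd measurable_ΨT, hmapΨ]
  have hν : volume.restrict ((Set.Ico (-(1/2) : ℝ) (1/2)) ×ˢ (Set.univ : Set E2))
      = muI.prod (volume : Measure E2) :=
    (restrict_prod_univ_right _).symm
  have hpoint : ∀ r : ℝ × E2, ((volume : Measure E2).prod (volume : Measure E2))
      {x : E2 × E2 | (x, r) ∈ S'} = volume ((fun y => rotE r.1 y + r.2) '' A ∩ B) ^ 2 := by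
    intro r
    have hfc : Continuous (fun y : E2 => rotE r.1 y + r.2) :=
      (continuous_rotE_comp continuous_const continuous_id).add continuous_const
    have hA'open : IsOpen (A ∩ (fun y : E2 => rotE r.1 y + r.2) ⁻¹' B) :=
      hAo.inter (hBo.preimage hfc)
    have hsec : {x : E2 × E2 | (x, r) ∈ S'} =
        ((A ∩ (fun y : E2 => rotE r.1 y + r.2) ⁻¹' B) ×ˢ
          (A ∩ (fun y : E2 => rotE r.1 y + r.2) ⁻¹' B))
          \ {x : E2 × E2 | x.1 = x.2} := by
      ext ⟨x1, x2⟩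
      simp only [hS'def, Set.mem_setOf_eq, Set.mem_diff, Set.mem_prod, Set.mem_inter_iff,
        Set.mem_preimage]
      tauto
    have hdiagm : MeasurableSet {x : E2 × E2 | x.1 = x.2} :=
      measurableSet_eq_fun measurable_fst measurable_snd
    have hdiag : ((volume : Measure E2).prod (volume : Measure E2))
        {x : E2 × E2 | x.1 = x.2} = 0 := by
      rw [Measure.prod_apply hdiagm]
      have hz : ∀ x : E2, (volume : Measure E2)
          (Prod.mk x ⁻¹' {p : E2 × E2 | p.1 = p.2}) = 0 := by
        intro x
        have hxeq : Prod.mk x ⁻¹' {p : E2 × E2 | p.1 = p.2} = {x} := by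
          ext y; simp [eq_comm]
        rw [hxeq]
        exact measure_singleton x
      simp only [hz]
      simp
    rw [hsec, measure_diff_null hdiag, Measure.prod_prod]
    have himg : (fun y : E2 => rotE r.1 y + r.2) '' A ∩ B
        = (fun y : E2 => rotE r.1 y + r.2) '' (A ∩ (fun y : E2 => rotE r.1 y + r.2) ⁻¹' B) :=
      (Set.image_inter_preimage _ _ _).symm
    rw [himg, volume_rigid_image r.1 r.2 hA'open.measurableSet, pow_two]
  ext t ht
  rw [Measure.map_apply measurable_snd ht,
    Measure.restrict_apply (measurable_snd ht),
    Measure.prod_apply_symm ((measurable_snd ht).inter hS'meas),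
    hν, withDensity_apply _ ht]
  have hind : ∀ r : ℝ × E2, ((volume : Measure E2).prod (volume : Measure E2))
      ((fun x : E2 × E2 => (x, r)) ⁻¹' (Prod.snd ⁻¹' t ∩ S'))
      = t.indicator (fun r : ℝ × E2 => volume ((fun y => rotE r.1 y + r.2) '' A ∩ B) ^ 2) r := by
    intro r
    by_cases hr : r ∈ t
    · rw [Set.indicator_of_mem hr, ← hpoint r]
      congr 1
      ext x
      simp [hr]
    · rw [Set.indicator_of_notMem hr]
      have hempty : (fun x : E2 × E2 => (x, r)) ⁻¹' (Prod.snd ⁻¹' t ∩ S') = ∅ := by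
        ext x; simp [hr]
      rw [hempty]
      exact measure_empty
  simp_rw [hind]
  rw [lintegral_indicator ht]


lemma measurable_g2 (A B : Set E2) (hA : MeasurableSet A) (hB : MeasurableSet B) :
    Measurable fun r : ℝ × E2 => volume ((fun x => rotE r.1 x + r.2) '' A ∩ B) ^ 2 := by
  have hW : MeasurableSet {ry : (ℝ × E2) × E2 | rotE (-ry.1.1) (ry.2 - ry.1.2) ∈ A ∧ ry.2 ∈ B} := by
    simp only [Set.setOf_and]
    exact (hA.preimage (measurable_rotE_comp measurable_fst.fst.neg
      (measurable_snd.sub measurable_fst.snd))).inter (hB.preimage measurable_snd)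
  have h := measurable_measure_prodMk_left (ν := (volume : Measure E2)) hW
  have heq : (fun r : ℝ × E2 => volume ((fun x => rotE r.1 x + r.2) '' A ∩ B))
      = fun r : ℝ × E2 => volume
        (Prod.mk r ⁻¹' {ry : (ℝ × E2) × E2 | rotE (-ry.1.1) (ry.2 - ry.1.2) ∈ A ∧ ry.2 ∈ B}) := by
    funext r
    congr 1
    rw [rigid_image_eq_preimage]
    ext y
    simp only [Set.mem_inter_iff, Set.mem_preimage, Set.mem_setOf_eq]
  have h2 : Measurable fun r : ℝ × E2 => volume ((fun x => rotE r.1 x + r.2) '' A ∩ B) := by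
    rw [heq]; exact h
  exact h2.pow_const 2

/-- The `3+1`-points sample space `S` for shapes `A`, `B`: its measure is at
most `|A|²·|B|`, and the rigid motion determined by a uniformly random element
of `S` has density `r ↦ |r(A) ∩ B|²/|S|` on the space of rigid motions
`[-1/2,1/2) × ℝ²`. -/
theorem stmt17 (A B : Set (EuclideanSpace ℝ (Fin 2)))
    (hAo : IsOpen A) (hBo : IsOpen B)
    (hAb : Bornology.IsBounded A) (hBb : Bornology.IsBounded B)
    (hApos : 0 < volume A) (hBpos : 0 < volume B)
    (S : Set (EuclideanSpace ℝ (Fin 2) × EuclideanSpace ℝ (Fin 2) ×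
      EuclideanSpace ℝ (Fin 2) × ℝ))
    (hS : S = {q | q.1 ∈ A ∧ q.2.1 ∈ A ∧ q.2.2.1 ∈ B ∧
      q.2.2.2 ∈ Set.Ico (-(1 / 2) : ℝ) (1 / 2) ∧ q.1 ≠ q.2.1 ∧
      q.2.2.1 + ‖q.2.1 - q.1‖ • rotE q.2.2.2 e₁ ∈ B}) :
    volume S ≤ volume A * volume A * volume B ∧
    Measure.map
        (fun q : EuclideanSpace ℝ (Fin 2) × EuclideanSpace ℝ (Fin 2) ×
            EuclideanSpace ℝ (Fin 2) × ℝ =>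
          ((sampleAngle q.1 q.2.1 q.2.2.2 : ℝ),
            q.2.2.1 - rotE (sampleAngle q.1 q.2.1 q.2.2.2) q.1))
        ((volume S)⁻¹ • volume.restrict S) =
      (volume.restrict
          (Set.Ico (-(1 / 2) : ℝ) (1 / 2) ×ˢ
            (Set.univ : Set (EuclideanSpace ℝ (Fin 2))))).withDensity
        (fun r : ℝ × EuclideanSpace ℝ (Fin 2) =>
          volume ((fun x => rotE r.1 x + r.2) '' A ∩ B) ^ 2 / volume S) := by
  have part1 : volume S ≤ volume A * volume A * volume B := by
    have hsub : S ⊆ A ×ˢ A ×ˢ B ×ˢ Set.Ico (-(1 / 2) : ℝ) (1 / 2) := by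
      intro q hq; rw [hS] at hq
      exact ⟨hq.1, hq.2.1, hq.2.2.1, hq.2.2.2.1⟩
    refine (measure_mono hsub).trans_eq ?_
    rw [Measure.volume_eq_prod, Measure.prod_prod, Measure.volume_eq_prod, Measure.prod_prod,
      Measure.volume_eq_prod, Measure.prod_prod, Real.volume_Ico]
    have h1 : ENNReal.ofReal ((1:ℝ)/2 - -(1/2)) = 1 := by norm_num
    rw [h1, mul_one, ← mul_assoc]
  refine ⟨part1, ?_⟩
  have hstar := star_lemma A B hAo hBo S hS
  rcases eq_or_ne (volume S) 0 with hc | hc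
  · have h0 : volume.restrict S = 0 := Measure.restrict_eq_zero.2 hc
    rw [hc, h0, smul_zero, Measure.map_zero]
    have h2 : (volume.restrict
          (Set.Ico (-(1 / 2) : ℝ) (1 / 2) ×ˢ
            (Set.univ : Set (EuclideanSpace ℝ (Fin 2))))).withDensity
        (fun r : ℝ × EuclideanSpace ℝ (Fin 2) =>
          volume ((fun x => rotE r.1 x + r.2) '' A ∩ B) ^ 2) = 0 := by
      rw [← hstar, h0, Measure.map_zero]
    have hae := withDensity_eq_zero
      (measurable_g2 A B hAo.measurableSet hBo.measurableSet).aemeasurable h2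
    symm
    refine Eq.trans (withDensity_congr_ae (f := fun r : ℝ × EuclideanSpace ℝ (Fin 2) =>
        volume ((fun x => rotE r.1 x + r.2) '' A ∩ B) ^ 2 / 0) (g := 0)
        (hae.mono fun r hr => ?_)) withDensity_zero
    simp only [Pi.zero_apply] at hr ⊢
    rw [hr, ENNReal.zero_div]
  · have hfin : volume S ≠ ⊤ := by
      refine ne_top_of_le_ne_top ?_ part1
      exact ENNReal.mul_ne_top (ENNReal.mul_ne_top hAb.measure_lt_top.ne hAb.measure_lt_top.ne)
        hBb.measure_lt_top.ne
    rw [Measure.map_smul, hstar, ← withDensity_smul' _ _ (ENNReal.inv_ne_top.2 hc)]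
    congr 1
    funext r
    simp only [Pi.smul_apply, smul_eq_mul]
    rw [ENNReal.div_eq_inv_mul]

end
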